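/- Let n ∈ ℕ and j ∈ ℤ. Then (1/2π) ∫₀^{2π} P_n(cos θ) · cos(jθ) dθ = F̃_{(n+j)/2, n} if |j| ≤ n and n ≡ j (mod 2), and the integral equals 0 otherwise. -/

import Mathlib

open Real

lemma integral_cos_nat (a : ℕ) : ∫ θ in (0:ℝ)..(2*π), Real.cos (a*θ) =
    if a = 0 then 2*π else 0 := by
  rcases eq_or_ne a 0 with h | h
  · simp [h]
  · have hc : (a:ℝ) ≠ 0 := Nat.cast_ne_zero.mpr h
    rw [if_neg h, intervalIntegral.integral_comp_mul_left (fun x => Real.cos x) hc]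
    have h2 : (a:ℝ)*(2*π) = ((2*a : ℤ):ℝ)*π := by push_cast; ring
    rw [integral_cos, mul_zero, h2, Real.sin_int_mul_pi]
    simp

lemma cont_int (m a : ℕ) : IntervalIntegrable (fun θ => Real.cos θ ^ m * Real.cos (a*θ))
    MeasureTheory.volume 0 (2*π) :=
  (Continuous.mul (by fun_prop) (by fun_prop)).intervalIntegrable _ _

lemma cosPow_cos (m : ℕ) : ∀ a : ℕ,
    ∫ θ in (0:ℝ)..(2*π), Real.cos θ ^ m * Real.cos (a*θ) =
    if a ≤ m ∧ m % 2 = a % 2 then 2*π * (m.choose ((m+a)/2)) / 2^m else 0 := by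
  induction m with
  | zero =>
    intro a
    simp only [pow_zero, one_mul, integral_cos_nat]
    rcases eq_or_ne a 0 with h | h
    · simp [h]
    · rw [if_neg h, if_neg]; rintro ⟨h1, h2⟩; omega
  | succ m IH =>
    intro a
    match a with
    | 0 =>
      have hpt : ∀ θ:ℝ, Real.cos θ ^ (m+1) * Real.cos ((0:ℕ)*θ)
          = Real.cos θ ^ m * Real.cos ((1:ℕ)*θ) := by
        intro θ; push_cast; simp [pow_succ]
      rw [intervalIntegral.integral_congr (g := fun θ => Real.cos θ ^ m * Real.cos ((1:ℕ)*θ))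
        (fun θ _ => hpt θ), IH 1]
      obtain ⟨s, hs⟩ | ⟨s, hs⟩ := Nat.even_or_odd m
      · rw [if_neg (by omega), if_neg (by omega)]
      · rw [if_pos (by omega), if_pos (by omega)]
        have h1 : (m+1)/2 = s+1 := by omega
        have h2 : (m+1+0)/2 = s+1 := by omega
        have h3 : (m+1).choose (s+1) = 2 * m.choose (s+1) := by
          subst hs
          rw [Nat.choose_succ_succ]
          have h4 : (2*s+1).choose (s+1) = (2*s+1).choose s := by
            rw [← Nat.choose_symm (by omega : s+1 ≤ 2*s+1)]
            congr 1; omega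
          simp only [Nat.succ_eq_add_one]
          omega
        simp only [Nat.add_zero] at *
        rw [h1, h3]
        push_cast
        rw [pow_succ]
        ring
    | b+1 =>
      have hpt : ∀ θ:ℝ, Real.cos θ ^ (m+1) * Real.cos ((b+1:ℕ)*θ)
          = (Real.cos θ ^ m * Real.cos ((b+2:ℕ)*θ) + Real.cos θ ^ m * Real.cos ((b:ℕ)*θ))/2 := by
        intro θ; push_cast
        rw [show ((b:ℝ)+2)*θ = ((b+1)*θ + θ) by ring,
            show (b:ℝ)*θ = ((b+1)*θ - θ) by ring, Real.cos_add, Real.cos_sub, pow_succ]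
        ring
      rw [intervalIntegral.integral_congr
        (g := fun θ => (Real.cos θ ^ m * Real.cos ((b+2:ℕ)*θ) + Real.cos θ ^ m * Real.cos ((b:ℕ)*θ))/2)
        (fun θ _ => hpt θ)]
      rw [intervalIntegral.integral_div,
          intervalIntegral.integral_add (cont_int m (b+2)) (cont_int m b), IH (b+2), IH b]
      obtain ⟨s, hs⟩ | ⟨s, hs⟩ := Nat.even_or_odd (m + b)
      · -- parity match
        rcases lt_or_ge m b with hb | hb
        · -- b > m : all zero
          rw [if_neg (by omega), if_neg (by omega), if_neg (by omega)]; norm_num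
        · rcases eq_or_lt_of_le hb with heq | hlt
          · -- b = m
            subst heq
            rw [if_neg (by omega : ¬(b+2 ≤ b ∧ b % 2 = (b+2) % 2)),
                if_pos (⟨le_refl b, rfl⟩ : b ≤ b ∧ b % 2 = b % 2),
                if_pos (by omega : b+1 ≤ b+1 ∧ (b+1) % 2 = (b+1) % 2)]
            have h1 : (b+b)/2 = b := by omega
            have h2 : (b+1+(b+1))/2 = b+1 := by omega
            rw [h1, h2, Nat.choose_self, Nat.choose_self]
            push_cast
            rw [pow_succ]
            ring
          · -- b + 2 ≤ m
            have hb2 : b + 2 ≤ m := by omega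
            rw [if_pos (⟨hb2, by omega⟩ : b+2 ≤ m ∧ m % 2 = (b+2) % 2),
                if_pos (⟨by omega, by omega⟩ : b ≤ m ∧ m % 2 = b % 2),
                if_pos (by omega : b+1 ≤ m+1 ∧ (m+1) % 2 = (b+1) % 2)]
            obtain ⟨u, hu⟩ : ∃ u, (m+b)/2 = u := ⟨_, rfl⟩
            have h1 : (m+(b+2))/2 = u+1 := by omega
            have h2 : (m+1+(b+1))/2 = u+1 := by omega
            rw [h1, h2, hu, Nat.choose_succ_succ]
            push_cast
            rw [pow_succ]
            ring
      · -- parity mismatch : all zero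
        rw [if_neg (by omega), if_neg (by omega), if_neg (by omega)]; norm_num

open Nat in
noncomputable def tt (q r k : ℕ) : ℝ :=
  (-1)^k * 4^k * ((2*(q+r-k)).factorial : ℝ) /
    ((k.factorial : ℝ) * ((q+r-k).factorial : ℝ) * ((r-k).factorial : ℝ) * ((q-k).factorial : ℝ))

lemma fact_cast_ne (n : ℕ) : ((n.factorial : ℝ)) ≠ 0 :=
  Nat.cast_ne_zero.mpr (Nat.factorial_ne_zero n)

lemma tt_key (q r k : ℕ) (hk : k ≤ r) (hq : r + 1 ≤ q) :
    ((r:ℝ)+1-(k:ℝ)) * tt q (r+1) k + ((k:ℝ)+1) * tt q (r+1) (k+1)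
      = 2*(2*(r:ℝ)+1) * tt q r k := by
  obtain ⟨b, rfl⟩ : ∃ b, r = k + b := ⟨r - k, by omega⟩
  obtain ⟨c, rfl⟩ : ∃ c, q = k + c + 1 := ⟨q - k - 1, by omega⟩
  unfold tt
  have e1 : k + c + 1 + (k + b) - k = k+b+c+1 := by omega
  have e2 : k + c + 1 + (k + b + 1) - k = k+b+c+2 := by omega
  have e3 : k + c + 1 + (k + b + 1) - (k+1) = k+b+c+1 := by omega
  have e4 : k + b - k = b := by omega
  have e5 : k + b + 1 - k = b + 1 := by omega
  have e6 : k + b + 1 - (k+1) = b := by omega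
  have e7 : k + c + 1 - k = c + 1 := by omega
  have e8 : k + c + 1 - (k+1) = c := by omega
  rw [e1, e2, e3, e4, e5, e6, e7, e8]
  have f1 : (2*(k+b+c+2)).factorial
      = (2*(k+b+c+1)+2) * ((2*(k+b+c+1)+1) * (2*(k+b+c+1)).factorial) := by
    rw [show 2*(k+b+c+2) = 2*(k+b+c+1)+1+1 by ring, Nat.factorial_succ, Nat.factorial_succ]
  have f2 : (k+b+c+2).factorial = (k+b+c+2) * (k+b+c+1).factorial := by
    rw [show k+b+c+2 = (k+b+c+1)+1 by ring, Nat.factorial_succ]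
  rw [f1, f2, Nat.factorial_succ b, Nat.factorial_succ c, Nat.factorial_succ k]
  push_cast
  field_simp
  ring

lemma tt_sum (q : ℕ) : ∀ r, r ≤ q → ∑ k ∈ Finset.range (r+1), tt q r k
    = ((2*q).choose q : ℝ) * ((2*r).choose r : ℝ) := by
  intro r
  induction r with
  | zero =>
    intro _
    rw [show (0:ℕ)+1 = 1 from rfl, Finset.sum_range_one]
    unfold tt
    have h : (2*q).choose q * q.factorial * q.factorial = (2*q).factorial := by
      have := Nat.choose_mul_factorial_mul_factorial (by omega : q ≤ 2*q)
      rwa [show 2*q - q = q by omega] at this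
    simp only [Nat.add_zero, Nat.zero_sub, Nat.sub_zero, pow_zero, Nat.factorial_zero]
    rw [Nat.choose_zero_right]
    push_cast [← h]
    field_simp
  | succ r IH =>
    intro hq
    have hr : r ≤ q := by omega
    have step : 2*(2*(r:ℝ)+1) * ∑ k ∈ Finset.range (r+1), tt q r k
        = ((r:ℝ)+1) * ∑ k ∈ Finset.range (r+2), tt q (r+1) k := by
      rw [Finset.mul_sum, Finset.mul_sum]
      have lhs_eq : ∀ k ∈ Finset.range (r+1),
          2*(2*(r:ℝ)+1) * tt q r k
          = (((r:ℝ)+1-(k:ℝ)) * tt q (r+1) k + ((k:ℝ)+1) * tt q (r+1) (k+1)) := by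
        intro k hk
        rw [tt_key q r k (by simpa using Nat.lt_succ_iff.mp (Finset.mem_range.mp hk)) hq]
      rw [Finset.sum_congr rfl lhs_eq, Finset.sum_add_distrib]
      have h2 : ∑ k ∈ Finset.range (r+1), ((k:ℝ)+1) * tt q (r+1) (k+1)
          = ∑ k ∈ Finset.range (r+2), (k:ℝ) * tt q (r+1) k := by
        rw [Finset.sum_range_succ' (fun k => (k:ℝ) * tt q (r+1) k) (r+1)]
        simp
      have h1 : ∑ k ∈ Finset.range (r+2), ((r:ℝ)+1-(k:ℝ)) * tt q (r+1) k
          = ∑ k ∈ Finset.range (r+1), ((r:ℝ)+1-(k:ℝ)) * tt q (r+1) k := by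
        rw [Finset.sum_range_succ]
        have hz : ((r:ℝ)+1-((r+1:ℕ):ℝ)) = 0 := by push_cast; ring
        rw [hz, zero_mul, add_zero]
      rw [h2, ← h1, ← Finset.sum_add_distrib]
      apply Finset.sum_congr rfl
      intro k _
      ring
    have hcb : ((r:ℕ)+1) * (2*(r+1)).choose (r+1) = 2 * (2*r+1) * ((2*r).choose r) := by
      have := Nat.succ_mul_centralBinom_succ r
      unfold Nat.centralBinom at this
      convert this using 2 <;> omega
    rw [IH hr] at step
    have hr1 : ((r:ℝ)+1) ≠ 0 := by positivity
    have : ((r:ℝ)+1) * ∑ k ∈ Finset.range (r+2), tt q (r+1) k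
        = ((r:ℝ)+1) * (((2*q).choose q : ℝ) * ((2*(r+1)).choose (r+1) : ℝ)) := by
      rw [← step]
      have : (((r:ℕ)+1) * (2*(r+1)).choose (r+1) : ℝ) = (2 * (2*r+1) * ((2*r).choose r) : ℕ) := by
        exact_mod_cast congrArg (Nat.cast : ℕ → ℝ) hcb
      push_cast at this ⊢
      nlinarith [this]
    exact mul_left_cancel₀ hr1 this


noncomputable section

/-- the Legendre polynomial P_n(ξ) = ∑_{k=0}^{⌊n/2⌋} p_{n,k} ξ^{n-2k} -/
def legP (n : ℕ) (ξ : ℝ) : ℝ :=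
  ∑ k ∈ Finset.range (n / 2 + 1),
    ((-1 : ℝ) ^ k / 2 ^ n) * (Nat.factorial (2 * n - 2 * k) : ℝ) /
      ((Nat.factorial k : ℝ) * (Nat.factorial (n - k) : ℝ) * (Nat.factorial (n - 2 * k) : ℝ)) *
      ξ ^ (n - 2 * k)

/-- F̃_{q,n} = (2q)!(2n-2q)! / (2^{2n} (q!)² ((n-q)!)²) -/
def Ftil (q n : ℕ) : ℝ :=
  ((Nat.factorial (2 * q) : ℝ) * (Nat.factorial (2 * n - 2 * q) : ℝ)) /
    (2 ^ (2 * n) * (Nat.factorial q : ℝ) ^ 2 * (Nat.factorial (n - q) : ℝ) ^ 2)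


open Real in
lemma main_nat (n a : ℕ) :
    ∫ θ in (0:ℝ)..(2*π), legP n (Real.cos θ) * Real.cos (a*θ)
    = if a ≤ n ∧ n % 2 = a % 2 then 2*π * Ftil ((n+a)/2) n else 0 := by
  unfold legP
  rw [intervalIntegral.integral_congr (g := fun θ => ∑ k ∈ Finset.range (n/2+1),
      (-1 : ℝ) ^ k / 2 ^ n * (Nat.factorial (2 * n - 2 * k) : ℝ) /
      ((Nat.factorial k : ℝ) * (Nat.factorial (n - k) : ℝ) * (Nat.factorial (n - 2 * k) : ℝ)) *
      (Real.cos θ ^ (n - 2*k) * Real.cos (a*θ)))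
    (fun θ _ => by rw [Finset.sum_mul]; exact Finset.sum_congr rfl (fun k _ => by ring))]
  rw [intervalIntegral.integral_finset_sum (fun k _ =>
    (Continuous.intervalIntegrable (by fun_prop) _ _ :
      IntervalIntegrable (fun θ => (-1 : ℝ) ^ k / 2 ^ n * (Nat.factorial (2 * n - 2 * k) : ℝ) /
      ((Nat.factorial k : ℝ) * (Nat.factorial (n - k) : ℝ) * (Nat.factorial (n - 2 * k) : ℝ)) *
      (Real.cos θ ^ (n - 2*k) * Real.cos (a*θ))) MeasureTheory.volume 0 (2*π)))]
  simp_rw [intervalIntegral.integral_const_mul, cosPow_cos]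
  by_cases hpar : n % 2 = a % 2
  · by_cases han : a ≤ n
    · -- main case
      rw [if_pos ⟨han, hpar⟩]
      set q := (n+a)/2 with hq
      set r := (n-a)/2 with hr
      have hqr : q + r = n := by omega
      have hstep : ∀ k ∈ Finset.range (n/2 + 1),
          (-1 : ℝ) ^ k / 2 ^ n * (Nat.factorial (2 * n - 2 * k) : ℝ) /
            ((Nat.factorial k : ℝ) * (Nat.factorial (n - k) : ℝ) * (Nat.factorial (n - 2 * k) : ℝ)) *
          (if a ≤ n - 2*k ∧ (n - 2*k) % 2 = a % 2
            then 2*π * ((n-2*k).choose ((n - 2*k + a)/2) : ℝ) / 2^(n-2*k) else 0)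
          = if k ≤ r then 2*π/2^(2*n) * tt q r k else 0 := by
        intro k hk
        have hk2 : k ≤ n/2 := by
          have := Finset.mem_range.mp hk; omega
        by_cases hkr : k ≤ r
        · rw [if_pos (by omega : a ≤ n - 2*k ∧ (n - 2*k) % 2 = a % 2), if_pos hkr]
          have i1 : (n - 2*k + a)/2 = q - k := by omega
          have i2 : 2*(q + r - k) = 2*n - 2*k := by omega
          have i3 : q + r - k = n - k := by omega
          have i5 : q - k ≤ n - 2*k := by omega
          have hcnat := Nat.choose_mul_factorial_mul_factorial i5
          rw [show n - 2*k - (q-k) = r - k by omega] at hcnat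
          have hc2 : (((n-2*k).choose (q-k)) : ℝ)
              = ((n-2*k).factorial : ℝ) / (((q-k).factorial : ℝ) * ((r-k).factorial : ℝ)) := by
            rw [eq_div_iff (by positivity)]
            push_cast [← hcnat]
            ring
          rw [i1, hc2]
          unfold tt
          rw [i2, i3]
          have hpow : (2:ℝ)^(2*n) = 2^n * 2^(n-2*k) * 4^k := by
            rw [show (4:ℝ) = 2^2 by norm_num, ← pow_mul, ← pow_add, ← pow_add]
            congr 1; omega
          rw [hpow]
          field_simp
        · rw [if_neg (by omega : ¬(a ≤ n - 2*k ∧ (n - 2*k) % 2 = a % 2)), if_neg hkr, mul_zero]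
      rw [Finset.sum_congr rfl hstep]
      rw [← Finset.sum_subset (Finset.range_subset_range.mpr (by omega : r + 1 ≤ n/2 + 1))
        (fun k _ hk => if_neg (by simp at hk; omega))]
      rw [Finset.sum_congr rfl (fun k hk => if_pos (by simp at hk; omega))]
      rw [← Finset.mul_sum, tt_sum q r (by omega)]
      -- final numeric identity
      unfold Ftil
      have hq1 : (2*q).choose q * q.factorial * q.factorial = (2*q).factorial := by
        have := Nat.choose_mul_factorial_mul_factorial (by omega : q ≤ 2*q)
        rwa [show 2*q - q = q by omega] at this
      have hr1 : (2*r).choose r * r.factorial * r.factorial = (2*r).factorial := by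
        have := Nat.choose_mul_factorial_mul_factorial (by omega : r ≤ 2*r)
        rwa [show 2*r - r = r by omega] at this
      rw [show 2*n - 2*q = 2*r by omega, show n - q = r by omega]
      push_cast [← hq1, ← hr1]
      field_simp
    · -- a > n : all zero
      rw [if_neg (by omega)]
      apply Finset.sum_eq_zero
      intro k hk
      rw [if_neg (by have := Finset.mem_range.mp hk; omega), mul_zero]
  · -- parity mismatch
    rw [if_neg (by omega)]
    apply Finset.sum_eq_zero
    intro k hk
    rw [if_neg (by have := Finset.mem_range.mp hk; omega), mul_zero]


lemma Ftil_symm (q n : ℕ) (h : q ≤ n) : Ftil (n - q) n = Ftil q n := by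
  unfold Ftil
  rw [show 2*n - 2*(n-q) = 2*q by omega, show n - (n-q) = q by omega,
      show 2*(n-q) = 2*n - 2*q by omega]
  ring


/-- the Fourier coefficients of θ ↦ P_n(cos θ):
(1/2π)∫₀^{2π} P_n(cos θ) cos(jθ) dθ equals F̃_{(n+j)/2,n} when |j| ≤ n and n ≡ j (mod 2),
and 0 otherwise. -/
theorem legendre_fourier_coeff (n : ℕ) (j : ℤ) :
    (1 / (2 * Real.pi)) * ∫ θ in (0:ℝ)..(2 * Real.pi),
        legP n (Real.cos θ) * Real.cos ((j : ℝ) * θ) =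
      if |j| ≤ (n : ℤ) ∧ ((n : ℤ) - j) % 2 = 0 then Ftil ((((n : ℤ) + j) / 2).toNat) n
      else 0 := by
  set a := j.natAbs with ha
  have hcos : ∀ θ:ℝ, Real.cos ((j:ℝ)*θ) = Real.cos ((a:ℝ)*θ) := by
    intro θ
    rcases Int.natAbs_eq j with h | h
    · rw [h, Int.cast_natCast, ← ha]
    · rw [h, Int.cast_neg, Int.cast_natCast, neg_mul, Real.cos_neg]
  rw [intervalIntegral.integral_congr
    (g := fun θ => legP n (Real.cos θ) * Real.cos ((a:ℝ)*θ)) (fun θ _ => by rw [hcos θ])]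
  rw [main_nat n a, Int.abs_eq_natAbs, ← ha]
  have hπ := Real.pi_ne_zero
  by_cases hcond : (a:ℤ) ≤ (n:ℤ) ∧ ((n : ℤ) - j) % 2 = 0
  · have hc2 : a ≤ n ∧ n % 2 = a % 2 := by
      rcases Int.natAbs_eq j with h | h <;> (constructor <;> omega)
    rw [if_pos hc2, if_pos hcond]
    rcases Int.natAbs_eq j with h | h
    · rw [show (((n:ℤ)+j)/2).toNat = (n+a)/2 by omega]
      field_simp
    · rw [show (((n:ℤ)+j)/2).toNat = (n-a)/2 by omega,
          show (n-a)/2 = n - (n+a)/2 by omega, Ftil_symm _ _ (by omega)]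
      field_simp
  · have hc2 : ¬(a ≤ n ∧ n % 2 = a % 2) := by
      rcases Int.natAbs_eq j with h | h <;> omega
    rw [if_neg hc2, if_neg hcond, mul_zero]


end
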